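/- Let (P_i)_{i∈ℕ} and P be Borel probability measures on X. Then P_i converges weakly to P (i.e. ∫ f dP_i → ∫ f dP for every bounded continuous f : X → ℝ) if and only if P_i{x ∈ X : x|_n = a} → P{x ∈ X : x|_n = a} for every n ∈ ℕ and every a ∈ X_n. -/

import Mathlib

open MeasureTheory Filter Topology BoundedContinuousFunction
open scoped ENNReal NNReal

/-- The space of coherent sequences (inverse limit) of the system `r n : X (n+1) → X n`. -/
abbrev Coherent (X : ℕ → Type*) (r : ∀ n, X (n + 1) → X n) : Type _ :=
  {x : ∀ n, X n // ∀ n, r n (x (n + 1)) = x n}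

section Aux

variable {X : ℕ → Type*} {r : ∀ n, X (n + 1) → X n}

/-- Projections of coherent sequences are determined by later coordinates. -/
lemma coherent_proj_eq (x y : Coherent X r) {m n : ℕ} (hmn : m ≤ n)
    (h : x.1 n = y.1 n) : x.1 m = y.1 m := by
  obtain ⟨k, rfl⟩ := Nat.exists_eq_add_of_le hmn
  clear hmn
  induction k with
  | zero => exact h
  | succ k ih =>
    apply ih
    rw [← x.2 (m + k), ← y.2 (m + k)]
    exact congrArg (r (m + k)) h

variable [∀ n, TopologicalSpace (X n)] [∀ n, DiscreteTopology (X n)]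

lemma cylinder_isClopen (n : ℕ) (a : X n) :
    IsClopen {x : Coherent X r | x.1 n = a} := by
  have hcont : Continuous (fun x : Coherent X r => x.1 n) :=
    (continuous_apply n).comp continuous_subtype_val
  have : {x : Coherent X r | x.1 n = a} = (fun x : Coherent X r => x.1 n) ⁻¹' {a} := rfl
  rw [this]
  exact (isClopen_discrete {a}).preimage hcont

end Aux

/-- **Weak convergence on almost discrete spaces is convergence of cylinder
probabilities** (Lemma `lemma:procountable`, addendum (i)): Borel probability measures
`P i` converge weakly to `P` iff `P i {x : x|ₙ = a} → P {x : x|ₙ = a}` for every `n`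
and `a ∈ X n`. -/
theorem weak_convergence_iff_cylinder
    (X : ℕ → Type*) [∀ n, Countable (X n)] [∀ n, Nonempty (X n)]
    [∀ n, TopologicalSpace (X n)] [∀ n, DiscreteTopology (X n)]
    (r : ∀ n, X (n + 1) → X n) (hr : ∀ n, Function.Surjective (r n))
    [MeasurableSpace (Coherent X r)] [BorelSpace (Coherent X r)]
    (P : ℕ → Measure (Coherent X r)) (Q : Measure (Coherent X r))
    [∀ i, IsProbabilityMeasure (P i)] [IsProbabilityMeasure Q] :
    (∀ f : Coherent X r →ᵇ ℝ,
        Tendsto (fun i => ∫ x, f x ∂(P i)) atTop (𝓝 (∫ x, f x ∂Q))) ↔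
      (∀ (n : ℕ) (a : X n),
        Tendsto (fun i => P i {x : Coherent X r | x.1 n = a}) atTop
          (𝓝 (Q {x : Coherent X r | x.1 n = a}))) := by
  classical
  constructor
  · -- weak convergence implies cylinder convergence
    intro h n a
    set S : Set (Coherent X r) := {x : Coherent X r | x.1 n = a} with hS_def
    have hS : IsClopen S := cylinder_isClopen n a
    -- indicator function of S as a bounded continuous function
    have hcont : Continuous (fun x : Coherent X r => if x.1 n = a then (1 : ℝ) else 0) := by
      have : (fun x : Coherent X r => if x.1 n = a then (1 : ℝ) else 0) =
          (fun b : X n => if b = a then (1 : ℝ) else 0) ∘ (fun x : Coherent X r => x.1 n) := rfl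
      rw [this]
      exact (continuous_of_discreteTopology).comp
        ((continuous_apply n).comp continuous_subtype_val)
    set f : Coherent X r →ᵇ ℝ :=
      ⟨⟨fun x => if x.1 n = a then (1 : ℝ) else 0, hcont⟩, 2, by
        intro x y
        simp only [ContinuousMap.coe_mk]
        have hx : (if x.1 n = a then (1 : ℝ) else 0) = 0 ∨
            (if x.1 n = a then (1 : ℝ) else 0) = 1 := by split_ifs <;> simp
        have hy : (if y.1 n = a then (1 : ℝ) else 0) = 0 ∨
            (if y.1 n = a then (1 : ℝ) else 0) = 1 := by split_ifs <;> simp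
        rcases hx with hx | hx <;> rcases hy with hy | hy <;>
          rw [hx, hy] <;> simp [Real.dist_eq] <;> norm_num⟩ with hf_def
    have hind : ∀ x : Coherent X r, f x = S.indicator (fun _ => (1 : ℝ)) x := by
      intro x
      by_cases hx : x.1 n = a
      · rw [Set.indicator_of_mem (show x ∈ S from hx)]
        show (if x.1 n = a then (1 : ℝ) else 0) = 1
        exact if_pos hx
      · rw [Set.indicator_of_notMem (show x ∉ S from hx)]
        show (if x.1 n = a then (1 : ℝ) else 0) = 0
        exact if_neg hx
    have hint : ∀ (μ : Measure (Coherent X r)) [IsProbabilityMeasure μ],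
        ∫ x, f x ∂μ = (μ S).toReal := by
      intro μ _
      rw [show (fun x => f x) = S.indicator (fun _ => (1 : ℝ)) from funext hind]
      rw [integral_indicator_const (1 : ℝ) hS.2.measurableSet]
      simp
      rfl
    have := h f
    simp only [hint] at this
    exact (ENNReal.tendsto_toReal_iff (fun i => measure_ne_top _ _)
      (measure_ne_top _ _)).mp this
  · -- cylinder convergence implies weak convergence
    intro h
    -- key: liminf condition for open sets (at the level of `Measure`, valued in `ℝ≥0∞`)
    have key : ∀ G : Set (Coherent X r), IsOpen G →
        Q G ≤ atTop.liminf (fun i => P i G) := by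
      intro G hG
      set C : ∀ n, X n → Set (Coherent X r) := fun n a => {x : Coherent X r | x.1 n = a}
        with hC_def
      have hCmeas : ∀ n a, MeasurableSet (C n a) :=
        fun n a => (cylinder_isClopen n a).2.measurableSet
      set A : ∀ n, Set (X n) := fun n => {a : X n | C n a ⊆ G} with hA_def
      set Gn : ℕ → Set (Coherent X r) := fun n => ⋃ a ∈ A n, C n a with hGn_def
      -- membership in Gn
      have memGn : ∀ n (x : Coherent X r), x ∈ Gn n ↔ C n (x.1 n) ⊆ G := by
        intro n x
        constructor
        · rintro hx
          simp only [hGn_def, Set.mem_iUnion] at hx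
          obtain ⟨a, ha, hxa⟩ := hx
          have : x.1 n = a := hxa
          rwa [this]
        · intro hx
          simp only [hGn_def, Set.mem_iUnion]
          exact ⟨x.1 n, hx, rfl⟩
      -- Gn is monotone
      have hmono : Monotone Gn := by
        apply monotone_nat_of_le_succ
        intro n x hx
        rw [memGn] at hx ⊢
        intro y hy
        apply hx
        have : y.1 n = x.1 n := by
          rw [← y.2 n, ← x.2 n, hy.out]
        exact this
      -- union of Gn is G
      have hunion : ⋃ n, Gn n = G := by
        apply Set.Subset.antisymm
        · intro x hx
          simp only [Set.mem_iUnion] at hx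
          obtain ⟨n, hn⟩ := hx
          rw [memGn] at hn
          exact hn rfl
        · intro x hx
          -- use openness of G to find a cylinder neighborhood
          obtain ⟨U, hU, hUG⟩ := isOpen_induced_iff.mp hG
          have hxU : x.1 ∈ U := by rw [← hUG] at hx; exact hx
          obtain ⟨I, u, hu, hsub⟩ := isOpen_pi_iff.mp hU x.1 hxU
          set N := I.sup id with hN_def
          simp only [Set.mem_iUnion]
          refine ⟨N, (memGn N x).mpr ?_⟩
          intro y hy
          have hyN : y.1 N = x.1 N := hy
          have : y.1 ∈ U := by
            apply hsub
            intro i hi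
            have hiN : i ≤ N := Finset.le_sup (f := id) hi
            have : y.1 i = x.1 i := coherent_proj_eq y x hiN hyN
            rw [this]
            exact (hu i hi).2
          rw [← hUG]
          exact this
      -- the measures Q (Gn n) tend to Q G
      have htend : Tendsto (fun n => Q (Gn n)) atTop (𝓝 (Q G)) := by
        have := tendsto_measure_iUnion_atTop (μ := Q) hmono
        rwa [hunion] at this
      -- it suffices to bound each Q (Gn n)
      refine le_of_tendsto htend (Eventually.of_forall fun n => ?_)
      -- Q (Gn n) as a sum over the countable set A n
      have hdisj : (A n).PairwiseDisjoint (C n) := by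
        intro a _ b _ hab
        refine Set.disjoint_left.mpr fun x hxa hxb => hab ?_
        rw [← hxa.out, ← hxb.out]
      have hsum : Q (Gn n) = ∑' a : A n, Q (C n a) := by
        rw [hGn_def]
        exact measure_biUnion (Set.to_countable _) hdisj (fun a _ => hCmeas n a)
      rw [hsum, ENNReal.tsum_eq_iSup_sum]
      apply iSup_le
      intro F
      -- the finite union of cylinders over F
      set U : Set (Coherent X r) := ⋃ a ∈ F, C n (a : X n) with hU_def
      have hUG : U ⊆ G := by
        intro x hx
        simp only [hU_def, Set.mem_iUnion] at hx
        obtain ⟨a, _, hxa⟩ := hx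
        exact a.2 hxa
      have hsumU : ∀ μ : Measure (Coherent X r), μ U = ∑ a ∈ F, μ (C n (a : X n)) := by
        intro μ
        rw [hU_def]
        rw [measure_biUnion_finset ?_ (fun a _ => hCmeas n _)]
        intro a _ b _ hab
        refine Set.disjoint_left.mpr fun x hxa hxb => hab ?_
        have : (a : X n) = (b : X n) := by rw [← hxa.out, ← hxb.out]
        exact Subtype.ext this
      -- P i U tends to Q U = ∑ over F
      have htendU : Tendsto (fun i => P i U) atTop (𝓝 (∑ a ∈ F, Q (C n (a : X n)))) := by
        simp only [hsumU]
        exact tendsto_finset_sum F (fun a _ => h n (a : X n))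
      calc ∑ a ∈ F, Q (C n (a : X n)) = atTop.liminf (fun i => P i U) :=
            (htendU.liminf_eq).symm
        _ ≤ atTop.liminf (fun i => P i G) :=
            liminf_le_liminf (Eventually.of_forall fun i => measure_mono hUG)
    -- now conclude weak convergence via the portmanteau theorem
    set P' : ℕ → ProbabilityMeasure (Coherent X r) := fun i => ⟨P i, inferInstance⟩
    set Q' : ProbabilityMeasure (Coherent X r) := ⟨Q, inferInstance⟩
    have hconv : Tendsto P' atTop (𝓝 Q') := by
      apply tendsto_of_forall_isOpen_le_liminf
      intro G hG
      have aux : (↑(atTop.liminf fun i => P' i G) : ℝ≥0∞) =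
          atTop.liminf (fun i => ((P' i G : ℝ≥0∞))) := by
        refine Monotone.map_liminf_of_continuousAt (F := atTop) ENNReal.coe_mono
          (fun i => P' i G) ENNReal.continuous_coe.continuousAt ?_ ?_
        · exact IsBoundedUnder.isCoboundedUnder_ge ⟨1, by simp⟩
        · exact ⟨0, by simp⟩
      rw [← ENNReal.coe_le_coe, aux]
      simp only [ProbabilityMeasure.ennreal_coeFn_eq_coeFn_toMeasure]
      exact key G hG
    intro f
    exact ProbabilityMeasure.tendsto_iff_forall_integral_tendsto.mp hconv f
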